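/- For every N ∈ ℕ and every n ∈ ℕ, the incomplete von Mangoldt function admits the finite Ramanujan expansion Λ_N(n) = ∑_{q ≤ N} Λ̂_N(q) c_q(n), where Λ̂_N(q) = −(μ(q)/q) ∑_{d ≤ N/q, gcd(d,q)=1} μ(d) log(dq)/d. -/

import Mathlib

open Finset

/-- The Ramanujan sum `c_q(n) = ∑_{1 ≤ j ≤ q, gcd(j,q)=1} exp(2πi j n / q)`. -/
noncomputable def cq (q : ℕ) (n : ℤ) : ℂ :=
  ∑ j ∈ (Finset.Icc 1 q).filter (fun j => Nat.Coprime j q),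
    Complex.exp (2 * Real.pi * Complex.I * j * n / q)

/-- The incomplete von Mangoldt function `Λ_N(n) = -∑_{d ≤ N, d ∣ n} μ(d) log d`. -/
noncomputable def LamN (N n : ℕ) : ℝ :=
  -∑ d ∈ (Finset.Icc 1 N).filter (fun d => d ∣ n),
    (ArithmeticFunction.moebius d : ℝ) * Real.log d

/-- The correlation `C_{Λ,Λ_N}(N, n) = ∑_{m ≤ N} Λ(m) Λ_N(m + n)`. -/
noncomputable def corr (N n : ℕ) : ℝ :=
  ∑ m ∈ Finset.Icc 1 N, ArithmeticFunction.vonMangoldt m * LamN N (m + n)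

/-- The Ramanujan coefficient `Λ̂_N(q) = -(μ(q)/q) ∑_{d ≤ N/q, gcd(d,q)=1} μ(d) log(dq)/d`. -/
noncomputable def LamHat (N q : ℕ) : ℝ :=
  -((ArithmeticFunction.moebius q : ℝ) / q) *
    ∑ d ∈ (Finset.Icc 1 (N / q)).filter (fun d => Nat.Coprime d q),
      (ArithmeticFunction.moebius d : ℝ) * Real.log (d * q) / d

/-- `ℤ_q^* = {m ∈ ℕ ∩ [1,q] : gcd(m,q) = 1}`. -/
def Zstar (q : ℕ) : Finset ℕ := (Finset.Icc 1 q).filter (fun m => Nat.Coprime m q)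

/-- `ψ(N; q, k) = ∑_{n ≤ N, n ≡ k (mod q)} Λ(n)`. -/
noncomputable def psi (N q k : ℕ) : ℝ :=
  ∑ n ∈ (Finset.Icc 1 N).filter (fun n => n % q = k % q),
    ArithmeticFunction.vonMangoldt n

/-- `δ(h; q, k) = c_q(k+h) - (μ(q)/φ(q)) c_q(h)`. -/
noncomputable def dev (h q k : ℕ) : ℂ :=
  cq q ((k : ℤ) + h) - (ArithmeticFunction.moebius q : ℂ) / (Nat.totient q : ℂ) * cq q h

/-- `Δ(N, h) = ∑_{q ≤ N} Λ̂_N(q) ∑_{k ∈ ℤ_q^*} ψ(N;q,k) δ(h;q,k)`. -/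
noncomputable def Delta (N h : ℕ) : ℂ :=
  ∑ q ∈ Finset.Icc 1 N, (LamHat N q : ℂ) *
    ∑ k ∈ Zstar q, (psi N q k : ℂ) * dev h q k

/-- `S_N(q, k; r) = ∑_{n ≤ N, n ≡ k (mod q)} c_r(n)`. -/
noncomputable def SN (N q : ℕ) (k : ℤ) (r : ℕ) : ℂ :=
  ∑ n ∈ (Finset.Icc 1 N).filter (fun n : ℕ => (n : ℤ) % (q : ℤ) = k % (q : ℤ)), cq r n

lemma geo (t : ℕ) (n : ℤ) (ht : 0 < t) :
    ∑ a ∈ Finset.Icc 1 t, Complex.exp (2 * Real.pi * Complex.I * a * n / t)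
      = if (t : ℤ) ∣ n then (t : ℂ) else 0 := by
  have htC : (t : ℂ) ≠ 0 := Nat.cast_ne_zero.mpr ht.ne'
  set r : ℂ := Complex.exp (2 * Real.pi * Complex.I * n / t) with hr
  have hrpow : ∀ a : ℕ, Complex.exp (2 * Real.pi * Complex.I * a * n / t) = r ^ a := by
    intro a
    rw [hr, ← Complex.exp_nat_mul]
    ring_nf
  have hrt : r ^ t = 1 := by
    rw [hr, ← Complex.exp_nat_mul]
    rw [show (t : ℂ) * (2 * Real.pi * Complex.I * n / t) = n * (2 * Real.pi * Complex.I) by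
      field_simp]
    exact Complex.exp_int_mul_two_pi_mul_I n
  have hr1 : r = 1 ↔ (t : ℤ) ∣ n := by
    rw [hr, Complex.exp_eq_one_iff]
    constructor
    · rintro ⟨k, hk⟩
      refine ⟨k, ?_⟩
      have hπ : (2 : ℂ) * Real.pi * Complex.I ≠ 0 := by
        simp [Real.pi_ne_zero, Complex.I_ne_zero]
      have : (n : ℂ) = t * k := by
        have h2 : (n : ℂ) * (2 * Real.pi * Complex.I) = (t * k) * (2 * Real.pi * Complex.I) := by
          have := hk
          field_simp at this
          rw [this]
        exact mul_right_cancel₀ hπ h2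
      exact_mod_cast this
    · rintro ⟨k, hk⟩
      refine ⟨k, ?_⟩
      rw [hk]; push_cast; field_simp
  simp only [hrpow]
  have hshift : ∑ a ∈ Finset.Icc 1 t, r ^ a = r * ∑ a ∈ Finset.range t, r ^ a := by
    rw [show Finset.Icc 1 t = Finset.Ico 1 (t+1) by rfl, Finset.sum_Ico_eq_sum_range,
      Finset.mul_sum]
    simp [pow_succ, pow_add, mul_comm]
  rw [hshift]
  by_cases h1 : r = 1
  · rw [if_pos (hr1.mp h1)]; simp [h1]
  · rw [if_neg (fun hd => h1 (hr1.mpr hd))]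
    rw [geom_sum_eq h1, hrt]
    simp

lemma divpart (t : ℕ) (n : ℤ) (ht : 0 < t) :
    ∑ q ∈ t.divisors, cq q n
      = ∑ a ∈ Finset.Icc 1 t, Complex.exp (2 * Real.pi * Complex.I * a * n / t) := by
  unfold cq
  rw [Finset.sum_sigma']
  refine Finset.sum_nbij' (fun p => p.2 * (t / p.1)) (fun a => ⟨t / Nat.gcd a t, a / Nat.gcd a t⟩)
    ?_ ?_ ?_ ?_ ?_
  · rintro ⟨q, j⟩ hp
    simp only [Finset.mem_sigma, Nat.mem_divisors, Finset.mem_filter, Finset.mem_Icc] at hp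
    obtain ⟨⟨hqt, -⟩, ⟨hj1, hjq⟩, hcop⟩ := hp
    have hq0 : 0 < q := Nat.pos_of_dvd_of_pos hqt ht
    have htq0 : 0 < t / q := Nat.div_pos (Nat.le_of_dvd ht hqt) hq0
    simp only [Finset.mem_Icc]
    refine ⟨Nat.mul_pos hj1 htq0, ?_⟩
    calc j * (t / q) ≤ q * (t / q) := Nat.mul_le_mul_right _ hjq
      _ = t := Nat.mul_div_cancel' hqt
  · intro a ha
    simp only [Finset.mem_Icc] at ha
    obtain ⟨ha1, hat⟩ := ha
    have ha0 : 0 < a := ha1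
    have hg : 0 < Nat.gcd a t := Nat.gcd_pos_of_pos_left t ha0
    simp only [Finset.mem_sigma, Nat.mem_divisors, Finset.mem_filter, Finset.mem_Icc]
    refine ⟨⟨Nat.div_dvd_of_dvd (Nat.gcd_dvd_right a t), ht.ne'⟩, ⟨?_, ?_⟩, ?_⟩
    · exact Nat.div_pos (Nat.le_of_dvd ha0 (Nat.gcd_dvd_left a t)) hg
    · exact Nat.div_le_div_right hat
    · exact Nat.coprime_div_gcd_div_gcd hg
  · rintro ⟨q, j⟩ hp
    simp only [Finset.mem_sigma, Nat.mem_divisors, Finset.mem_filter, Finset.mem_Icc] at hp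
    obtain ⟨⟨hqt, -⟩, ⟨hj1, hjq⟩, hcop⟩ := hp
    have hq0 : 0 < q := Nat.pos_of_dvd_of_pos hqt ht
    have htq0 : 0 < t / q := Nat.div_pos (Nat.le_of_dvd ht hqt) hq0
    have hgcd : Nat.gcd (j * (t / q)) t = t / q := by
      have h2 : (j * (t / q)).gcd (q * (t / q)) = t / q := by
        rw [Nat.gcd_mul_right, hcop, one_mul]
      rwa [Nat.mul_div_cancel' hqt] at h2
    simp only [hgcd]
    congr 1
    · exact Nat.div_div_self hqt ht.ne'
    · rw [Nat.mul_div_cancel _ htq0]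
  · intro a ha
    simp only [Finset.mem_Icc] at ha
    have hg : 0 < Nat.gcd a t := Nat.gcd_pos_of_pos_left t ha.1
    have h1 : t / (t / Nat.gcd a t) = Nat.gcd a t :=
      Nat.div_div_self (Nat.gcd_dvd_right a t) ht.ne'
    simp only [h1]
    exact Nat.div_mul_cancel (Nat.gcd_dvd_left a t)
  · rintro ⟨q, j⟩ hp
    simp only [Finset.mem_sigma, Nat.mem_divisors, Finset.mem_filter, Finset.mem_Icc] at hp
    obtain ⟨⟨hqt, -⟩, ⟨hj1, hjq⟩, hcop⟩ := hp
    have hq0 : 0 < q := Nat.pos_of_dvd_of_pos hqt ht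
    have hqC : (q : ℂ) ≠ 0 := Nat.cast_ne_zero.mpr hq0.ne'
    have htC : (t : ℂ) ≠ 0 := Nat.cast_ne_zero.mpr ht.ne'
    congr 1
    rw [div_eq_div_iff hqC htC]
    have key : ((j * (t / q) : ℕ) : ℂ) * q = (j : ℂ) * t := by
      have h3 : (j * (t / q)) * q = j * t := by
        rw [mul_assoc, Nat.div_mul_cancel hqt]
      exact_mod_cast congrArg (Nat.cast : ℕ → ℂ) h3
    push_cast at key ⊢
    linear_combination (-(2 * (Real.pi : ℂ) * Complex.I * (n : ℂ))) * key

lemma lemA (t : ℕ) (n : ℤ) (ht : 0 < t) :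
    ∑ q ∈ t.divisors, cq q n = if (t : ℤ) ∣ n then (t : ℂ) else 0 := by
  rw [divpart t n ht, geo t n ht]

lemma moeb_zero {t q : ℕ} (hq : q ∣ t) (h : ¬ Nat.Coprime (t / q) q) :
    ArithmeticFunction.moebius t = 0 := by
  apply ArithmeticFunction.moebius_eq_zero_of_not_squarefree
  intro hsq
  apply h
  have h1 : t / q * q = t := Nat.div_mul_cancel hq
  have := (Nat.squarefree_mul_iff.mp (h1 ▸ hsq)).1
  exact this

/-- the finite Ramanujan expansion of the incomplete von Mangoldt function. -/
theorem stmt1 (N n : ℕ) (hN : 1 ≤ N) (hn : 1 ≤ n) :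
    (LamN N n : ℂ) = ∑ q ∈ Finset.Icc 1 N, (LamHat N q : ℂ) * cq q (n : ℤ) := by
  -- Step 1: expand LamHat and distribute
  have step1 : ∀ q ∈ Finset.Icc 1 N, (LamHat N q : ℂ) * cq q (n : ℤ)
      = ∑ d ∈ (Finset.Icc 1 (N / q)).filter (fun d => Nat.Coprime d q),
          (-((ArithmeticFunction.moebius q : ℂ) * (ArithmeticFunction.moebius d : ℂ)
            * (Real.log (d * q) : ℂ)) / ((q : ℂ) * d)) * cq q (n : ℤ) := by
    intro q hq
    unfold LamHat
    push_cast
    rw [Finset.mul_sum, Finset.sum_mul]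
    refine Finset.sum_congr rfl fun d hd => ?_
    push_cast
    ring
  rw [Finset.sum_congr rfl step1, Finset.sum_sigma']
  -- Step 2: reindex (q, d) ↦ (t = q*d, q)
  have step2 : ∑ p ∈ (Finset.Icc 1 N).sigma
        (fun q => (Finset.Icc 1 (N / q)).filter (fun d => Nat.Coprime d q)),
      (-((ArithmeticFunction.moebius p.1 : ℂ) * (ArithmeticFunction.moebius p.2 : ℂ)
        * (Real.log (p.2 * p.1) : ℂ)) / ((p.1 : ℂ) * p.2)) * cq p.1 (n : ℤ)
      = ∑ p ∈ (Finset.Icc 1 N).sigma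
          (fun t => t.divisors.filter (fun q => Nat.Coprime (t / q) q)),
        (-((ArithmeticFunction.moebius p.1 : ℂ) * (Real.log p.1 : ℂ)) / (p.1 : ℂ))
          * cq p.2 (n : ℤ) := by
    refine Finset.sum_nbij' (fun p => ⟨p.1 * p.2, p.1⟩) (fun p => ⟨p.2, p.1 / p.2⟩)
      ?_ ?_ ?_ ?_ ?_
    · rintro ⟨q, d⟩ hp
      simp only [Finset.mem_sigma, Finset.mem_filter, Finset.mem_Icc] at hp ⊢
      obtain ⟨⟨hq1, hqN⟩, ⟨hd1, hdN⟩, hcop⟩ := hp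
      have hq0 : 0 < q := hq1
      have hqd : q * d ≤ N := by
        rw [Nat.le_div_iff_mul_le hq0] at hdN
        linarith [hdN, Nat.mul_comm d q]
      refine ⟨⟨Nat.mul_pos hq1 hd1, hqd⟩, ?_⟩
      simp only [Nat.mem_divisors]
      refine ⟨⟨⟨d, rfl⟩, (Nat.mul_pos hq1 hd1).ne'⟩, ?_⟩
      rw [Nat.mul_div_cancel_left d hq0]
      exact hcop
    · rintro ⟨t, q⟩ hp
      simp only [Finset.mem_sigma, Finset.mem_filter, Finset.mem_Icc, Nat.mem_divisors] at hp ⊢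
      obtain ⟨⟨ht1, htN⟩, ⟨hqt, ht0⟩, hcop⟩ := hp
      have hq0 : 0 < q := Nat.pos_of_dvd_of_pos hqt ht1
      refine ⟨⟨hq0, le_trans (Nat.le_of_dvd ht1 hqt) htN⟩,
        ⟨Nat.div_pos (Nat.le_of_dvd ht1 hqt) hq0, Nat.div_le_div_right htN⟩, hcop⟩
    · rintro ⟨q, d⟩ hp
      simp only [Finset.mem_sigma, Finset.mem_filter, Finset.mem_Icc] at hp
      obtain ⟨⟨hq1, hqN⟩, ⟨hd1, hdN⟩, hcop⟩ := hp
      simp only [Nat.mul_div_cancel_left d hq1]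
    · rintro ⟨t, q⟩ hp
      simp only [Finset.mem_sigma, Finset.mem_filter, Finset.mem_Icc, Nat.mem_divisors] at hp
      obtain ⟨⟨ht1, htN⟩, ⟨hqt, ht0⟩, hcop⟩ := hp
      simp only [Nat.mul_div_cancel' hqt]
    · rintro ⟨q, d⟩ hp
      simp only [Finset.mem_sigma, Finset.mem_filter, Finset.mem_Icc] at hp
      obtain ⟨⟨hq1, hqN⟩, ⟨hd1, hdN⟩, hcop⟩ := hp
      have hmu : ArithmeticFunction.moebius (q * d)
          = ArithmeticFunction.moebius q * ArithmeticFunction.moebius d :=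
        ArithmeticFunction.isMultiplicative_moebius.map_mul_of_coprime hcop.symm
      have hlog : Real.log ((q * d : ℕ) : ℝ) = Real.log ((d : ℝ) * (q : ℝ)) := by
        push_cast; rw [mul_comm]
      simp only [hmu, hlog]
      push_cast
      ring
  rw [step2, Finset.sum_sigma]
  -- Step 3: extend to all divisors and apply lemA
  have step3 : ∀ t ∈ Finset.Icc 1 N,
      (∑ q ∈ t.divisors.filter (fun q => Nat.Coprime (t / q) q),
        (-((ArithmeticFunction.moebius t : ℂ) * (Real.log t : ℂ)) / (t : ℂ))
          * cq q (n : ℤ))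
      = if t ∣ n then -((ArithmeticFunction.moebius t : ℂ) * (Real.log t : ℂ)) else 0 := by
    intro t ht
    simp only [Finset.mem_Icc] at ht
    have ht0 : 0 < t := ht.1
    rw [Finset.sum_filter_of_ne]
    · rw [← Finset.mul_sum, lemA t n ht0]
      have hdvd : ((t : ℤ) ∣ (n : ℤ)) ↔ t ∣ n := Int.natCast_dvd_natCast
      by_cases hd : t ∣ n
      · rw [if_pos (hdvd.mpr hd), if_pos hd]
        have htC : (t : ℂ) ≠ 0 := Nat.cast_ne_zero.mpr ht0.ne'
        field_simp
      · rw [if_neg (fun h => hd (hdvd.mp h)), if_neg hd, mul_zero]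
    · intro q hq hne
      by_contra hncop
      have : ArithmeticFunction.moebius t = 0 :=
        moeb_zero (Nat.mem_divisors.mp hq).1 hncop
      apply hne
      simp [this]
  rw [Finset.sum_congr rfl step3]
  -- Step 4: conclude
  unfold LamN
  push_cast
  rw [← Finset.sum_filter]
  rw [neg_eq_iff_eq_neg, ← Finset.sum_neg_distrib]
  refine Finset.sum_congr rfl fun d hd => by ring
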